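/- For a real number q with 0<q<1, nonnegative integer a, and positive integer n, the q-multiple harmonic sum on a string of a twos satisfies H_n^*[{2}^a] = ∑_{k=1}^n ((1+q^k)/[k]_q^{2a}) · ([n choose k]_q / [n+k choose k]_q) · (-1)^{k-1} q^{k(k-1)/2 + ak}. -/

import Mathlib

open Finset

/-- q-analogue of a natural number: [m]_q = (1-q^m)/(1-q). -/
noncomputable def qnum (q : ℝ) (m : ℕ) : ℝ := (1 - q ^ m) / (1 - q)

/-- q-Pochhammer (q;q)_n = ∏_{k=0}^{n-1} (1 - q^{k+1}). -/
noncomputable def qPoch (q : ℝ) (n : ℕ) : ℝ := ∏ k ∈ Finset.range n, (1 - q ^ (k + 1))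

/-- Gaussian q-binomial coefficient, 0 when m > n. -/
noncomputable def qbinom (q : ℝ) (n m : ℕ) : ℝ :=
  if m ≤ n then qPoch q n / (qPoch q m * qPoch q (n - m)) else 0

/-- q-multiple harmonic star sum H_n^*[s₁,…,s_m]. -/
noncomputable def qHstar (q : ℝ) : List ℕ → ℕ → ℝ
  | [], _ => 1
  | s :: rest, n => ∑ k ∈ Finset.Icc 1 n, q ^ k / qnum q k ^ s * qHstar q rest k

/-- q-multiple zeta star value ζ_q^*[s₁,…,s_m]. -/
noncomputable def qZetaStar (q : ℝ) : List ℕ → ℝ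
  | [] => 1
  | s :: rest => ∑' k : ℕ, q ^ (k + 1) / qnum q (k + 1) ^ s * qHstar q rest (k + 1)

/-- strict multiple harmonic sum ∑_{n ≥ k₁ > … > k_r ≥ 1} ∏ 1/k_j^{p_j}. -/
noncomputable def Hstrict : List ℕ → ℕ → ℝ
  | [], _ => 1
  | p :: rest, n => ∑ k ∈ Finset.Icc 1 n, (1 : ℝ) / (k : ℝ) ^ p * Hstrict rest (k - 1)

/-- binomial-weighted strict multiple harmonic sum Ĥ_n(p). -/
noncomputable def Hhat : List ℕ → ℕ → ℝ
  | [], _ => 1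
  | p :: rest, n => ∑ k ∈ Finset.Icc 1 n,
      ((n.choose k : ℝ) / ((n + k).choose n)) * ((1 : ℝ) / (k : ℝ) ^ p) * Hstrict rest (k - 1)

/-- ordinary multiple harmonic star sum H_n^*(s₁,…,s_m). -/
noncomputable def HstarO : List ℕ → ℕ → ℝ
  | [], _ => 1
  | s :: rest, n => ∑ k ∈ Finset.Icc 1 n, (1 : ℝ) / (k : ℝ) ^ s * HstarO rest k

/-- ordinary multiple zeta star value. -/
noncomputable def zetaStarO : List ℕ → ℝ
  | [] => 1
  | s :: rest => ∑' k : ℕ, (1 : ℝ) / ((k : ℝ) + 1) ^ s * HstarO rest (k + 1)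

/-- Merge a list of parts according to a comma(true)/plus(false) pattern. -/
def mergeComp : ℕ → List ℕ → List Bool → List ℕ
  | a, [], _ => [a]
  | a, _ :: _, [] => [a]
  | a, b :: t, true :: bs => a :: mergeComp b t bs
  | a, b :: t, false :: bs => mergeComp (a + b) t bs


noncomputable def trm (q : ℝ) (a n k : ℕ) : ℝ :=
  (1 + q ^ k) / qnum q k ^ (2 * a) * (qbinom q n k / qbinom q (n + k) k) *
    (-1 : ℝ) ^ (k - 1) * q ^ (k * (k - 1) / 2 + a * k)
noncomputable def Wf (q : ℝ) (n k : ℕ) : ℝ :=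
  1 - (-1 : ℝ) ^ k * q ^ (k * (k + 1) / 2) *
    (qPoch q n ^ 2 / (qPoch q (n - k) * qPoch q (n + k))) * (1 - q ^ (n - k)) / (1 - q ^ n)

section
variable {q : ℝ} (hq0 : 0 < q) (hq1 : q < 1)
include hq0 hq1

lemma one_sub_pow_ne (m : ℕ) (hm : 1 ≤ m) : (1 - q ^ m) ≠ 0 := by
  have : q ^ m < 1 := pow_lt_one₀ hq0.le hq1 (by omega)
  intro h; linarith

lemma qPoch_ne (n : ℕ) : qPoch q n ≠ 0 := by
  have : 0 < qPoch q n := by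
    unfold qPoch
    apply Finset.prod_pos
    intro k _
    have : q ^ (k+1) < 1 := pow_lt_one₀ hq0.le hq1 (by omega)
    linarith
  exact this.ne'

lemma qPoch_succ (n : ℕ) : qPoch q (n + 1) = qPoch q n * (1 - q ^ (n + 1)) :=
  Finset.prod_range_succ _ n


lemma qnum_ne (k : ℕ) (hk : 1 ≤ k) : qnum q k ≠ 0 := by
  unfold qnum
  have h1 := one_sub_pow_ne hq0 hq1 k hk
  have h2 : (1 - q) ≠ 0 := by have := one_sub_pow_ne hq0 hq1 1 le_rfl; simpa using this
  exact div_ne_zero h1 h2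

lemma trm_zero (a n k : ℕ) (h : n < k) : trm q a n k = 0 := by
  simp [trm, qbinom, if_neg (by omega : ¬ k ≤ n)]

lemma ratio_eq (n k : ℕ) (hk : k ≤ n) :
    qbinom q n k / qbinom q (n + k) k = qPoch q n ^ 2 / (qPoch q (n - k) * qPoch q (n + k)) := by
  unfold qbinom
  rw [if_pos hk, if_pos (Nat.le_add_left k n), Nat.add_sub_cancel]
  have h1 := qPoch_ne hq0 hq1 k
  have h2 := qPoch_ne hq0 hq1 (n - k)
  have h3 := qPoch_ne hq0 hq1 (n + k)
  have h4 := qPoch_ne hq0 hq1 n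
  field_simp

lemma tele (n k : ℕ) (hk1 : 1 ≤ k) (hkn : k ≤ n) :
    trm q 0 n k = Wf q n k - Wf q n (k - 1) := by
  obtain ⟨j, rfl⟩ : ∃ j, k = j + 1 := ⟨k - 1, by omega⟩
  obtain ⟨s, rfl⟩ : ∃ s, n = s + (j + 1) := ⟨n - (j + 1), by omega⟩
  have he2 : (j + 1) * ((j + 1) + 1) / 2 = j * (j + 1) / 2 + (j + 1) := by
    have h : (j + 1) * ((j + 1) + 1) = j * (j + 1) + 2 * (j + 1) := by ring
    rw [h, Nat.add_mul_div_left _ _ (by norm_num : 0 < 2)]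
  rw [trm, ratio_eq hq0 hq1 _ _ (by omega), Wf, Wf]
  rw [show j + 1 - 1 = j from rfl]
  rw [show (j + 1) * j / 2 + 0 * (j + 1) = j * (j + 1) / 2 from by
    simp [Nat.mul_comm]]
  rw [he2]
  rw [show s + (j + 1) - (j + 1) = s from by omega,
      show s + (j + 1) - j = s + 1 from by omega,
      show s + (j + 1) + (j + 1) = (s + (2 * j + 1)) + 1 from by omega,
      show s + (j + 1) + j = s + (2 * j + 1) from by omega]
  rw [qPoch_succ hq0 hq1, qPoch_succ hq0 hq1]
  have hA := qPoch_ne hq0 hq1 s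
  have hB := qPoch_ne hq0 hq1 (s + (2 * j + 1))
  have h1 := one_sub_pow_ne hq0 hq1 (s + 1) (by omega)
  have h2 := one_sub_pow_ne hq0 hq1 (s + (2 * j + 1) + 1) (by omega)
  have h3 := one_sub_pow_ne hq0 hq1 (s + (j + 1)) (by omega)
  simp only [Nat.mul_zero, Nat.zero_mul, Nat.add_zero, pow_zero, div_one]
  field_simp
  ring

lemma base_sum (n : ℕ) (hn : 1 ≤ n) : ∑ k ∈ Finset.Icc 1 n, trm q 0 n k = 1 := by
  rw [← Finset.Ico_add_one_right_eq_Icc, Finset.sum_Ico_eq_sum_range]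
  have hcg : ∀ i ∈ Finset.range (n + 1 - 1), trm q 0 n (1 + i) = Wf q n (i + 1) - Wf q n i := by
    intro i hi
    rw [Finset.mem_range] at hi
    rw [show 1 + i = i + 1 from by omega]
    rw [tele hq0 hq1 n (i + 1) (by omega) (by omega)]
    simp
  rw [Finset.sum_congr rfl hcg]
  rw [show n + 1 - 1 = n from by omega]
  rw [Finset.sum_range_sub (Wf q n)]
  have hPn := qPoch_ne hq0 hq1 n
  have hn1 := one_sub_pow_ne hq0 hq1 n hn
  rw [Wf, Wf]
  rw [Nat.sub_self, Nat.sub_zero, Nat.add_zero, pow_zero, pow_zero]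
  field_simp
  simp [hPn]

lemma step (a n k : ℕ) (hk1 : 1 ≤ k) (hk : k ≤ n + 1) :
    trm q (a + 1) (n + 1) k
      = trm q (a + 1) n k + q ^ (n + 1) / qnum q (n + 1) ^ 2 * trm q a (n + 1) k := by
  have hq' : (1 - q) ≠ 0 := by
    have := one_sub_pow_ne hq0 hq1 1 le_rfl; simpa using this
  have hqk := one_sub_pow_ne hq0 hq1 k hk1
  by_cases hkn : k ≤ n
  · obtain ⟨s, rfl⟩ : ∃ s, n = s + k := ⟨n - k, by omega⟩
    rw [trm, trm, trm, ratio_eq hq0 hq1 _ _ (by omega : k ≤ s + k + 1),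
        ratio_eq hq0 hq1 _ _ (by omega : k ≤ s + k)]
    rw [show s + k + 1 - k = s + 1 from by omega,
        show s + k - k = s from by omega,
        show s + k + 1 + k = (s + 2 * k) + 1 from by omega,
        show s + k + k = s + 2 * k from by omega]
    rw [qPoch_succ hq0 hq1 s, qPoch_succ hq0 hq1 (s + 2 * k), qPoch_succ hq0 hq1 (s + k)]
    rw [show 2 * (a + 1) = 2 * a + 2 from by ring,
        show k * (k - 1) / 2 + (a + 1) * k = (k * (k - 1) / 2 + a * k) + k from by
          have : (a + 1) * k = a * k + k := by ring
          omega]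
    rw [pow_add (q) (k * (k - 1) / 2 + a * k) k, pow_add (qnum q k) (2 * a) 2]
    have hA := qPoch_ne hq0 hq1 s
    have hB := qPoch_ne hq0 hq1 (s + 2 * k)
    have hC := qPoch_ne hq0 hq1 (s + k)
    have h1 := one_sub_pow_ne hq0 hq1 (s + 1) (by omega)
    have h2 := one_sub_pow_ne hq0 hq1 (s + 2 * k + 1) (by omega)
    have h3 := one_sub_pow_ne hq0 hq1 (s + k + 1) (by omega)
    have hnum := qnum_ne hq0 hq1 k hk1
    have hnum2 := qnum_ne hq0 hq1 (s + k + 1) (by omega)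
    rw [qnum, qnum]
    field_simp
    ring
  · have hk' : k = n + 1 := by omega
    subst hk'
    rw [trm_zero hq0 hq1 (a + 1) n (n + 1) (by omega), trm, trm]
    rw [show 2 * (a + 1) = 2 * a + 2 from by ring,
        show (n + 1) * (n + 1 - 1) / 2 + (a + 1) * (n + 1)
            = ((n + 1) * (n + 1 - 1) / 2 + a * (n + 1)) + (n + 1) from by
          have : (a + 1) * (n + 1) = a * (n + 1) + (n + 1) := by ring
          omega]
    rw [pow_add (q) _ (n + 1), pow_add (qnum q (n + 1)) (2 * a) 2]
    have hnum := qnum_ne hq0 hq1 (n + 1) (by omega)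
    field_simp
    ring

end

lemma main_lemma {q : ℝ} (hq0 : 0 < q) (hq1 : q < 1) (a : ℕ) : ∀ n, 1 ≤ n →
    qHstar q (List.replicate a 2) n = ∑ k ∈ Finset.Icc 1 n, trm q a n k := by
  induction a with
  | zero =>
    intro n hn
    simp only [List.replicate, qHstar]
    exact (base_sum hq0 hq1 n hn).symm
  | succ a ih =>
    have hrec : ∀ n : ℕ, qHstar q ((2 : ℕ) :: List.replicate a 2) (n + 1)
        = qHstar q ((2 : ℕ) :: List.replicate a 2) n
          + q ^ (n + 1) / qnum q (n + 1) ^ 2 * qHstar q (List.replicate a 2) (n + 1) := by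
      intro n
      rw [qHstar, qHstar, Finset.sum_Icc_succ_top (by omega : 1 ≤ n + 1)]
    have key : ∀ n : ℕ, qHstar q ((2 : ℕ) :: List.replicate a 2) n
        = ∑ k ∈ Finset.Icc 1 n, trm q (a + 1) n k := by
      intro n
      induction n with
      | zero => simp [qHstar]
      | succ n ihn =>
        rw [hrec n, ihn, ih (n + 1) (by omega)]
        have hstep : ∀ k ∈ Finset.Icc 1 (n + 1),
            trm q (a + 1) (n + 1) k
              = trm q (a + 1) n k + q ^ (n + 1) / qnum q (n + 1) ^ 2 * trm q a (n + 1) k := by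
          intro k hk
          rw [Finset.mem_Icc] at hk
          exact step hq0 hq1 a n k hk.1 hk.2
        rw [Finset.sum_congr rfl hstep, Finset.sum_add_distrib, ← Finset.mul_sum]
        have hdrop : ∑ k ∈ Finset.Icc 1 (n + 1), trm q (a + 1) n k
            = ∑ k ∈ Finset.Icc 1 n, trm q (a + 1) n k := by
          rw [Finset.sum_Icc_succ_top (by omega : 1 ≤ n + 1),
              trm_zero hq0 hq1 (a + 1) n (n + 1) (by omega), add_zero]
        rw [hdrop]
    intro n hn
    rw [List.replicate_succ]
    exact key n

theorem stmt5 (q : ℝ) (hq0 : 0 < q) (hq1 : q < 1) (a n : ℕ) (hn : 1 ≤ n) :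
    qHstar q (List.replicate a 2) n
    = ∑ k ∈ Finset.Icc 1 n,
        (1 + q ^ k) / qnum q k ^ (2 * a) * (qbinom q n k / qbinom q (n + k) k) *
          (-1 : ℝ) ^ (k - 1) * q ^ (k * (k - 1) / 2 + a * k) := by
  rw [main_lemma hq0 hq1 a n hn]
  exact Finset.sum_congr rfl fun k _ => by rw [trm]
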